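/- Suppose A is generated as a k-algebra by elements u_1, …, u_m such that for all 1 ≤ j < i ≤ m there exist a nonzero scalar q_{ij} ∈ k and scalars α^{ij}_{st}, β^{ij}_{st} ∈ k (for 1 ≤ s ≤ j−1 and 1 ≤ t ≤ m) satisfying u_i u_j = q_{ij} u_j u_i + Σ_{s=1}^{j−1} Σ_{t=1}^{m} ( α^{ij}_{st} u_s u_t + β^{ij}_{st} u_t u_s ). Then A is a Noetherian ring. -/

import Mathlib

namespace QCnoeth

open Finsupp Submodule

variable {k : Type*} [Field k] {A : Type*} [Ring A] [Algebra k A] {m : ℕ}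

/-- weights -/
def ww (m : ℕ) (j : Fin m) : ℕ := 2 ^ (m + 1) - 2 ^ (m - (j : ℕ))

abbrev E (m : ℕ) := Fin m →₀ ℕ

/-- total weight of an exponent vector -/
def W {m : ℕ} (a : E m) : ℕ := ∑ r, a r * ww m r

/-- ordered monomial -/
def U (u : Fin m → A) (a : E m) : A := ((List.finRange m).map fun r => u r ^ a r).prod

/-- the commutation cocycle -/
def cc (q : Fin m → Fin m → k) (a b : E m) : k :=
  ∏ i, ∏ j, (if j < i then q i j else 1) ^ (a i * b j)

/-- span of ordered monomials of weight at most n -/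
def P (k : Type*) [Field k] [Algebra k A] (u : Fin m → A) (n : ℕ) : Submodule k A := span k {x | ∃ a : E m, W a ≤ n ∧ U u a = x}

/-- span of ordered monomials of weight less than n -/
def Plt (k : Type*) [Field k] [Algebra k A] (u : Fin m → A) (n : ℕ) : Submodule k A := span k {x | ∃ a : E m, W a < n ∧ U u a = x}

section ww

lemma two_pow_sub_le {j : Fin m} : 2 ^ (m - (j:ℕ)) ≤ 2 ^ (m+1) :=
  Nat.pow_le_pow_right (by norm_num) (by omega)

lemma ww_pos {j : Fin m} : 1 ≤ ww m j := by
  have : 2 ^ (m - (j:ℕ)) < 2 ^ (m+1) := Nat.pow_lt_pow_right (by norm_num) (by omega)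
  simp only [ww]; omega

lemma ww_lt_add {t i j : Fin m} : ww m t < ww m i + ww m j := by
  have h1 : 2 ^ (m - (t:ℕ)) ≥ 1 := Nat.one_le_two_pow
  have h2 : 2 ^ (m - (i:ℕ)) ≤ 2 ^ m := Nat.pow_le_pow_right (by norm_num) (by omega)
  have h3 : 2 ^ (m - (j:ℕ)) ≤ 2 ^ m := Nat.pow_le_pow_right (by norm_num) (by omega)
  have h4 : (2:ℕ) ^ (m+1) = 2 ^ m + 2 ^ m := by ring
  have := @two_pow_sub_le m t
  have := @two_pow_sub_le m i
  have := @two_pow_sub_le m j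
  simp only [ww]; omega

/-- Key inequality: for `s < j < i`, correction terms have lower weight. -/
lemma ww_key {s j i t : Fin m} (hsj : s < j) (hji : j < i) :
    ww m s + ww m t < ww m i + ww m j := by
  have hsj' : (s:ℕ) < j := hsj
  have hji' : (j:ℕ) < i := hji
  have hi : (i:ℕ) < m := i.isLt
  -- ν s ≥ 2 * ν j,  ν i ≤ ν j / 2, ν t ≥ 2
  have h1 : 2 ^ (m - (s:ℕ)) ≥ 2 * 2 ^ (m - (j:ℕ)) := by
    have : 2 * 2 ^ (m - (j:ℕ)) = 2 ^ (m - (j:ℕ) + 1) := by ring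
    rw [this]; exact Nat.pow_le_pow_right (by norm_num) (by omega)
  have h2 : 2 * 2 ^ (m - (i:ℕ)) ≤ 2 ^ (m - (j:ℕ)) := by
    have : 2 * 2 ^ (m - (i:ℕ)) = 2 ^ (m - (i:ℕ) + 1) := by ring
    rw [this]; exact Nat.pow_le_pow_right (by norm_num) (by omega)
  have h3 : 2 ^ (m - (t:ℕ)) ≥ 2 := by
    have : (2:ℕ) ^ 1 ≤ 2 ^ (m - (t:ℕ)) := Nat.pow_le_pow_right (by norm_num) (by omega)
    simpa using this
  have := @two_pow_sub_le m s
  have := @two_pow_sub_le m i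
  have := @two_pow_sub_le m j
  have := @two_pow_sub_le m t
  simp only [ww]; omega

end ww

section W

lemma W_add {a b : E m} : W (a + b) = W a + W b := by
  simp only [W, Finsupp.add_apply, add_mul]
  rw [Finset.sum_add_distrib]

lemma W_single (i : Fin m) : W (Finsupp.single i 1 : E m) = ww m i := by
  simp only [W]
  rw [Finset.sum_eq_single i]
  · simp
  · intro b _ hb; simp [Finsupp.single_apply, Ne.symm hb]
  · simp

lemma W_eq_zero {a : E m} (h : W a = 0) : a = 0 := by
  ext r
  by_contra hr
  have h1 : a r * ww m r ≠ 0 := by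
    have := @ww_pos m r
    have : a r ≠ 0 := fun h => hr (by simp [h])
    simp only [Finsupp.coe_zero, Pi.zero_apply] at *
    exact Nat.mul_ne_zero ‹a r ≠ 0› (by omega)
  have : a r * ww m r ≤ W a := Finset.single_le_sum (f := fun r => a r * ww m r)
    (fun i _ => Nat.zero_le _) (Finset.mem_univ r)
  omega

end W






lemma U_zero (u : Fin m → A) : U u 0 = 1 := by
  simp only [U]
  apply List.prod_eq_one
  intro x hx
  simp only [List.mem_map] at hx
  obtain ⟨r, _, rfl⟩ := hx
  simp

private lemma listaux (u : Fin m → A) (f : Fin m → A) (i : Fin m) :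
    ∀ l : List (Fin m), l.Pairwise (· < ·) → i ∈ l → (∀ r ∈ l, r < i → f r = 1) →
      (l.map (fun r => if r = i then u i * f i else f r)).prod = u i * (l.map f).prod := by
  intro l
  induction l with
  | nil => simp
  | cons r t ih =>
    intro hp hi hone
    rcases List.pairwise_cons.1 hp with ⟨hrt, hpt⟩
    by_cases hri : r = i
    · subst hri
      simp only [List.map_cons, List.prod_cons, if_pos rfl]
      have : (t.map fun x => if x = r then u r * f r else f x).prod = (t.map f).prod := by
        congr 1
        apply List.map_congr_left
        intro x hx
        have hxr : x ≠ r := fun h => by subst h; exact lt_irrefl x (hrt x hx)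
        simp [hxr]
      rw [this]
      simp [mul_assoc]
    · have hit : i ∈ t := by
        rcases List.mem_cons.1 hi with h | h
        · exact absurd h.symm hri
        · exact h
      have hr_lt : r < i := hrt i hit
      have hfr : f r = 1 := hone r List.mem_cons_self hr_lt
      simp only [List.map_cons, List.prod_cons, if_neg hri, hfr, one_mul]
      rw [ih hpt hit (fun x hx hxi => hone x (List.mem_cons_of_mem r hx) hxi)]

/-- peeling the minimal-index variable off an ordered monomial -/
lemma U_single_add (u : Fin m → A) {i : Fin m} {a : E m} (h : ∀ j, j < i → a j = 0) :
    U u (Finsupp.single i 1 + a) = u i * U u a := by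
  have key := listaux u (fun r => u r ^ a r) i (List.finRange m)
    (List.pairwise_lt_finRange m) (List.mem_finRange i)
    (fun r _ hr => by show u r ^ a r = 1; rw [h r hr, pow_zero])
  rw [U, U, ← key]
  congr 1
  apply List.map_congr_left
  intro r _
  by_cases hri : r = i
  · subst hri
    simp [Finsupp.single_eq_same, pow_add, pow_one, if_pos rfl, pow_succ']
  · simp [Finsupp.single_apply, Ne.symm hri, hri]

lemma U_single (u : Fin m → A) (i : Fin m) : U u (Finsupp.single i 1) = u i := by
  have := U_single_add u (a := 0) (i := i) (fun j _ => rfl)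
  simpa [U_zero] using this

/-- peel the minimum of the support -/
lemma peel {a : E m} (h : a ≠ 0) :
    ∃ i : Fin m, ∃ a' : E m, a = Finsupp.single i 1 + a' ∧ (∀ j, j < i → a' j = 0)
      ∧ W a = ww m i + W a' := by
  have hs : a.support.Nonempty := Finsupp.support_nonempty_iff.2 h
  set i := a.support.min' hs with hi
  have hmem : i ∈ a.support := a.support.min'_mem hs
  have hai : a i ≠ 0 := Finsupp.mem_support_iff.1 hmem
  set a' : E m := a - Finsupp.single i 1 with ha'
  have heq : a = Finsupp.single i 1 + a' := by
    ext r
    by_cases hr : r = i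
    · subst hr
      simp only [ha', Finsupp.add_apply, Finsupp.tsub_apply, Finsupp.single_eq_same]
      omega
    · simp only [ha', Finsupp.add_apply, Finsupp.tsub_apply, Finsupp.single_apply,
        if_neg (Ne.symm hr)]
      omega
  have hlow : ∀ j, j < i → a' j = 0 := by
    intro j hj
    have hj' : a j = 0 := by
      by_contra hja
      have : i ≤ j := a.support.min'_le j (Finsupp.mem_support_iff.2 hja)
      exact absurd hj (not_lt.2 this)
    simp only [ha', Finsupp.tsub_apply, Finsupp.single_apply, hj']
    omega
  refine ⟨i, a', heq, hlow, ?_⟩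
  conv_lhs => rw [heq]
  rw [W_add, W_single]



section cc

variable {k : Type*} [Field k] {m : ℕ} (q : Fin m → Fin m → k)

lemma cc_zero_left {b : E m} : cc q 0 b = 1 := by
  simp [cc]

lemma cc_zero_right {a : E m} : cc q a 0 = 1 := by
  simp [cc]

lemma cc_add_left {a a' b : E m} : cc q (a + a') b = cc q a b * cc q a' b := by
  simp only [cc, Finsupp.add_apply, add_mul, pow_add, ← Finset.prod_mul_distrib]

lemma cc_add_right {a b b' : E m} : cc q a (b + b') = cc q a b * cc q a b' := by
  simp only [cc, Finsupp.add_apply, mul_add, pow_add, ← Finset.prod_mul_distrib]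

lemma cc_ne_zero (hq : ∀ i j : Fin m, j < i → q i j ≠ 0) {a b : E m} : cc q a b ≠ 0 := by
  rw [cc, Finset.prod_ne_zero_iff]
  intro i _
  rw [Finset.prod_ne_zero_iff]
  intro j _
  apply pow_ne_zero
  by_cases h : j < i
  · simpa [h] using hq i j h
  · simp [h]

lemma cc_single_left {i : Fin m} {b : E m} :
    cc q (Finsupp.single i 1) b = ∏ j, (if j < i then q i j else 1) ^ (b j) := by
  rw [cc, Finset.prod_eq_single i]
  · simp
  · intro x _ hx
    apply Finset.prod_eq_one
    intro j _
    rw [Finsupp.single_apply, if_neg (Ne.symm hx), zero_mul, pow_zero]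
  · simp

lemma cc_single_single {i j : Fin m} (h : j < i) :
    cc q (Finsupp.single i 1) (Finsupp.single j 1) = q i j := by
  rw [cc_single_left, Finset.prod_eq_single j]
  · simp [h]
  · intro x _ hx
    rw [Finsupp.single_apply, if_neg (Ne.symm hx), pow_zero]
  · simp

lemma cc_single_drop {i : Fin m} {x b : E m} (h : ∀ j, j < i → x j = 0) :
    cc q (Finsupp.single i 1) (x + b) = cc q (Finsupp.single i 1) b := by
  rw [cc_single_left, cc_single_left]
  apply Finset.prod_congr rfl
  intro j _
  by_cases hj : j < i
  · rw [Finsupp.add_apply, h j hj, zero_add]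
  · simp [hj]

end cc

section mainlemma

variable {k : Type*} [Field k] {A : Type*} [Ring A] [Algebra k A] {m : ℕ}
variable (u : Fin m → A) (q : Fin m → Fin m → k)

lemma Plt_le_Plt {n n' : ℕ} (h : n ≤ n') : Plt k u n ≤ Plt k u n' :=
  Submodule.span_mono (fun x ⟨a, ha, he⟩ => ⟨a, lt_of_lt_of_le ha h, he⟩)

lemma U_mem_Plt {a : E m} {n : ℕ} (h : W a < n) : U u a ∈ Plt k u n :=
  Submodule.subset_span ⟨a, h, rfl⟩

lemma U_mem_P {a : E m} {n : ℕ} (h : W a ≤ n) : U u a ∈ P k u n :=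
  Submodule.subset_span ⟨a, h, rfl⟩

lemma Plt_le_P {n : ℕ} : Plt k u n ≤ P k u n :=
  Submodule.span_mono (fun x ⟨a, ha, he⟩ => ⟨a, le_of_lt ha, he⟩)

/-- correction span -/
def corr (k : Type*) [Field k] [Algebra k A] (u : Fin m → A) (j : Fin m) : Submodule k A :=
  Submodule.span k {x | ∃ s t : Fin m, s < j ∧ (x = u s * u t ∨ x = u t * u s)}

theorem mainlem (hq : ∀ i j : Fin m, j < i → q i j ≠ 0)
    (hcor : ∀ i j : Fin m, j < i → u i * u j - q i j • (u j * u i) ∈ corr k u j) :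
    ∀ T : ℕ, ∀ (i : Fin m) (e : E m), ww m i + W e ≤ T →
      u i * U u e - cc q (Finsupp.single i 1) e • U u (Finsupp.single i 1 + e)
        ∈ Plt k u (ww m i + W e) := by
  intro T
  induction T using Nat.strong_induction_on with
  | _ T IH =>
  -- helper: multiplying a lower-order span by a generator
  have H : ∀ (s : Fin m) (n' : ℕ), ww m s + n' ≤ T → ∀ x ∈ Plt k u n',
      u s * x ∈ Plt k u (ww m s + n') := by
    intro s n' hbud x hx
    have hmap : Submodule.map (LinearMap.mulLeft k (u s)) (Plt k u n')
        ≤ Plt k u (ww m s + n') := by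
      rw [Plt, Submodule.map_span, Submodule.span_le]
      rintro _ ⟨_, ⟨f, hf, rfl⟩, rfl⟩
      simp only [LinearMap.mulLeft_apply, SetLike.mem_coe]
      have hT' : ww m s + W f < T := by omega
      have h1 := IH _ hT' s f le_rfl
      have h2 : u s * U u f = (u s * U u f
          - cc q (Finsupp.single s 1) f • U u (Finsupp.single s 1 + f))
          + cc q (Finsupp.single s 1) f • U u (Finsupp.single s 1 + f) := by abel
      rw [h2]
      refine Submodule.add_mem _ (Plt_le_Plt u (by omega) h1) (Submodule.smul_mem _ _ ?_)
      exact U_mem_Plt u (by rw [W_add, W_single]; omega)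
    exact hmap ⟨x, hx, rfl⟩
  intro i e hbud
  by_cases he : e = 0
  · subst he
    have h1 : U u ((Finsupp.single i 1 : E m) + 0) = u i := by rw [add_zero, U_single]
    rw [U_zero, cc_zero_right, h1, one_smul, mul_one, sub_self]
    exact Submodule.zero_mem _
  · obtain ⟨j, e', heq, hlow, hW⟩ := peel he
    by_cases hij : i ≤ j
    · -- no commutation needed
      have hlow' : ∀ r, r < i → e r = 0 := by
        intro r hr
        rw [heq]
        have h1 : (Finsupp.single j 1 : E m) r = 0 := by
          rw [Finsupp.single_apply, if_neg]
          intro hjr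
          subst hjr
          exact absurd hr (not_lt.2 hij)
        have h2 : e' r = 0 := hlow r (lt_of_lt_of_le hr hij)
        simp [h1, h2]
      have hU : U u (Finsupp.single i 1 + e) = u i * U u e := U_single_add u hlow'
      have hcc : cc q (Finsupp.single i 1) e = 1 := by
        rw [cc_single_left]
        apply Finset.prod_eq_one
        intro j' _
        by_cases h' : j' < i
        · rw [hlow' j' h', pow_zero]
        · simp [h']
      rw [hU, hcc, one_smul, sub_self]
      exact Submodule.zero_mem _
    · -- the interesting case j < i
      have hji : j < i := not_le.1 hij
      have hUe : U u e = u j * U u e' := by rw [heq]; exact U_single_add u hlow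
      have hT0 : ww m i + W e = ww m i + ww m j + W e' := by rw [hW]; ring
      -- corrections land low
      have pairlem : ∀ x z : Fin m, ww m x + ww m z < ww m i + ww m j →
          u x * (u z * U u e') ∈ Plt k u (ww m i + W e) := by
        intro x z hxz
        have hz : ww m z + W e' < T := by
          have := @ww_lt_add m z i j; omega
        have h1 := IH _ hz z e' le_rfl
        have h1' : u z * U u e' = cc q (Finsupp.single z 1) e' • U u (Finsupp.single z 1 + e')
            + (u z * U u e' - cc q (Finsupp.single z 1) e' • U u (Finsupp.single z 1 + e')) := by
          abel
        have hWz : W (Finsupp.single z 1 + e') = ww m z + W e' := by rw [W_add, W_single]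
        have hx2T : ww m x + W (Finsupp.single z 1 + e') < T := by rw [hWz]; omega
        have h2 := IH _ hx2T x (Finsupp.single z 1 + e') le_rfl
        rw [h1', mul_add, mul_smul_comm]
        refine Submodule.add_mem _ (Submodule.smul_mem _ _ ?_) ?_
        · -- u x * U (δz + e')
          have h2' : u x * U u (Finsupp.single z 1 + e')
              = (u x * U u (Finsupp.single z 1 + e')
                - cc q (Finsupp.single x 1) (Finsupp.single z 1 + e')
                  • U u (Finsupp.single x 1 + (Finsupp.single z 1 + e')))
              + cc q (Finsupp.single x 1) (Finsupp.single z 1 + e')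
                  • U u (Finsupp.single x 1 + (Finsupp.single z 1 + e')) := by abel
          rw [h2']
          refine Submodule.add_mem _ (Plt_le_Plt u ?_ h2) (Submodule.smul_mem _ _ ?_)
          · rw [hWz, hT0]; omega
          · exact U_mem_Plt u (by rw [W_add, W_single, hWz, hT0]; omega)
        · -- u x * y1
          have := H x (ww m z + W e') (by omega) _ h1
          exact Plt_le_Plt u (by rw [hT0]; omega) this
      have hcorr : ∀ z ∈ corr k u j, z * U u e' ∈ Plt k u (ww m i + W e) := by
        intro z hz
        have hmap : Submodule.map (LinearMap.mulRight k (U u e')) (corr k u j)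
            ≤ Plt k u (ww m i + W e) := by
          rw [corr, Submodule.map_span, Submodule.span_le]
          rintro _ ⟨_, ⟨s, t, hs, hst⟩, rfl⟩
          simp only [LinearMap.mulRight_apply, SetLike.mem_coe]
          rcases hst with h | h <;> subst h <;> rw [mul_assoc]
          · exact pairlem s t (ww_key hs hji)
          · exact pairlem t s (by have := ww_key (t := t) hs hji; omega)
        exact hmap ⟨z, hz, rfl⟩
      -- main recursive call
      have hie' : ww m i + W e' < T := by have := @ww_pos m j; omega
      have h5 := IH _ hie' i e' le_rfl
      set y := u i * U u e' - cc q (Finsupp.single i 1) e' • U u (Finsupp.single i 1 + e')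
        with hy
      set y0 := u i * u j - q i j • (u j * u i) with hy0
      have hjU : u j * U u (Finsupp.single i 1 + e') = U u (Finsupp.single i 1 + e) := by
        have hl : ∀ r, r < j → (Finsupp.single i 1 + e' : E m) r = 0 := by
          intro r hr
          have h1 : (Finsupp.single i 1 : E m) r = 0 := by
            rw [Finsupp.single_apply, if_neg]
            intro hir
            subst hir
            exact absurd (lt_trans hr hji) (lt_irrefl i)
          have h2 : e' r = 0 := hlow r hr
          simp [h1, h2]
        rw [← U_single_add u hl, heq]
        congr 1
        rw [add_left_comm]
      have hccdec : cc q (Finsupp.single i 1) e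
          = q i j * cc q (Finsupp.single i 1) e' := by
        rw [heq, cc_add_right, cc_single_single q hji]
      -- the key algebraic identity
      have key : u i * U u e - cc q (Finsupp.single i 1) e • U u (Finsupp.single i 1 + e)
          = q i j • (u j * y) + y0 * U u e' := by
        have e1 : u i * u j = q i j • (u j * u i) + y0 := by rw [hy0]; abel
        have e2 : u i * U u e' = cc q (Finsupp.single i 1) e' • U u (Finsupp.single i 1 + e')
            + y := by rw [hy]; abel
        rw [hUe, ← mul_assoc, e1, add_mul, smul_mul_assoc, mul_assoc, e2, mul_add,
          mul_smul_comm, hjU, hccdec, smul_add, smul_smul]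
        abel
      rw [key]
      refine Submodule.add_mem _ (Submodule.smul_mem _ _ ?_) (hcorr y0 (hcor i j hji))
      have := H j (ww m i + W e') (by omega) y h5
      exact Plt_le_Plt u (by omega) this

end mainlemma

section part5

variable {k : Type*} [Field k] {A : Type*} [Ring A] [Algebra k A] {m : ℕ}
variable (u : Fin m → A) (q : Fin m → Fin m → k)

lemma W_zero : W (0 : E m) = 0 := by simp [W]

lemma P_mono {n n' : ℕ} (h : n ≤ n') : P k u n ≤ P k u n' :=
  Submodule.span_mono (fun x ⟨a, ha, he⟩ => ⟨a, le_trans ha h, he⟩)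

variable (hq : ∀ i j : Fin m, j < i → q i j ≠ 0)
  (hcor : ∀ i j : Fin m, j < i → u i * u j - q i j • (u j * u i) ∈ corr k u j)
include hq hcor

/-- unconditional helper: generator times low-order span -/
lemma mulgen (s : Fin m) (n : ℕ) {x : A} (hx : x ∈ Plt k u n) :
    u s * x ∈ Plt k u (ww m s + n) := by
  have hmap : Submodule.map (LinearMap.mulLeft k (u s)) (Plt k u n)
      ≤ Plt k u (ww m s + n) := by
    rw [Plt, Submodule.map_span, Submodule.span_le]
    rintro _ ⟨_, ⟨f, hf, rfl⟩, rfl⟩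
    simp only [LinearMap.mulLeft_apply, SetLike.mem_coe]
    have h1 := mainlem u q hq hcor (ww m s + W f) s f le_rfl
    have h2 : u s * U u f = (u s * U u f
        - cc q (Finsupp.single s 1) f • U u (Finsupp.single s 1 + f))
        + cc q (Finsupp.single s 1) f • U u (Finsupp.single s 1 + f) := by abel
    rw [h2]
    refine Submodule.add_mem _ (Plt_le_Plt u (by omega) h1) (Submodule.smul_mem _ _ ?_)
    exact U_mem_Plt u (by rw [W_add, W_single]; omega)
  exact hmap ⟨x, hx, rfl⟩

/-- the product formula for general ordered monomials -/
theorem Umul : ∀ (N : ℕ) (a b : E m), W a ≤ N →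
    U u a * U u b - cc q a b • U u (a + b) ∈ Plt k u (W a + W b) := by
  intro N
  induction N using Nat.strong_induction_on with
  | _ N IH =>
  intro a b hN
  by_cases ha : a = 0
  · subst ha
    rw [U_zero, cc_zero_left, one_mul, one_smul, zero_add, sub_self]
    exact Submodule.zero_mem _
  · obtain ⟨i, a', heq, hlow, hW⟩ := peel ha
    have hwa' : W a' < W a := by have := @ww_pos m i; omega
    have h1 := IH (W a') (by omega) a' b le_rfl
    set y := U u a' * U u b - cc q a' b • U u (a' + b) with hy
    have h2 := mainlem u q hq hcor (ww m i + W (a' + b)) i (a' + b) le_rfl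
    set y2 := u i * U u (a' + b)
      - cc q (Finsupp.single i 1) (a' + b) • U u (Finsupp.single i 1 + (a' + b)) with hy2
    have hUa : U u a = u i * U u a' := by rw [heq]; exact U_single_add u hlow
    have hkey : U u a * U u b - cc q a b • U u (a + b)
        = cc q a' b • y2 + u i * y := by
      have e1 : U u a' * U u b = cc q a' b • U u (a' + b) + y := by rw [hy]; abel
      have e2 : u i * U u (a' + b)
          = cc q (Finsupp.single i 1) (a' + b) • U u (Finsupp.single i 1 + (a' + b)) + y2 := by
        rw [hy2]; abel
      have e3 : cc q a b = cc q a' b * cc q (Finsupp.single i 1) (a' + b) := by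
        rw [heq, cc_add_left]
        rw [cc_single_drop q hlow]
        ring
      have e4 : (Finsupp.single i 1 + (a' + b) : E m) = a + b := by rw [heq, add_assoc]
      rw [hUa, mul_assoc, e1, mul_add, mul_smul_comm, e2, e3, e4, smul_add, smul_smul]
      abel
    rw [hkey]
    have hm1 : cc q a' b • y2 ∈ Plt k u (W a + W b) := by
      refine Submodule.smul_mem _ _ (Plt_le_Plt u ?_ h2)
      rw [W_add, hW]; omega
    have hm2 : u i * y ∈ Plt k u (W a + W b) := by
      have := mulgen u q hq hcor i (W a' + W b) h1
      exact Plt_le_Plt u (by omega) this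
    exact Submodule.add_mem _ hm1 hm2

/-- monomial times filtration -/
lemma U_mul_P {a : E m} {n : ℕ} {x : A} (hx : x ∈ P k u n) :
    U u a * x ∈ P k u (W a + n) := by
  have hmap : Submodule.map (LinearMap.mulLeft k (U u a)) (P k u n)
      ≤ P k u (W a + n) := by
    rw [P, Submodule.map_span, Submodule.span_le]
    rintro _ ⟨_, ⟨f, hf, rfl⟩, rfl⟩
    simp only [LinearMap.mulLeft_apply, SetLike.mem_coe]
    have h1 := Umul u q hq hcor (W a) a f le_rfl
    have h2 : U u a * U u f = (U u a * U u f - cc q a f • U u (a + f))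
        + cc q a f • U u (a + f) := by abel
    rw [h2]
    refine Submodule.add_mem _ (Plt_le_P u (Plt_le_Plt u (by omega) h1))
      (Submodule.smul_mem _ _ ?_)
    exact U_mem_P u (by rw [W_add]; omega)
  exact hmap ⟨x, hx, rfl⟩

lemma U_mul_Plt {a : E m} {n : ℕ} {x : A} (hx : x ∈ Plt k u n) :
    U u a * x ∈ Plt k u (W a + n) := by
  have hmap : Submodule.map (LinearMap.mulLeft k (U u a)) (Plt k u n)
      ≤ Plt k u (W a + n) := by
    rw [Plt, Submodule.map_span, Submodule.span_le]
    rintro _ ⟨_, ⟨f, hf, rfl⟩, rfl⟩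
    simp only [LinearMap.mulLeft_apply, SetLike.mem_coe]
    have h1 := Umul u q hq hcor (W a) a f le_rfl
    have h2 : U u a * U u f = (U u a * U u f - cc q a f • U u (a + f))
        + cc q a f • U u (a + f) := by abel
    rw [h2]
    refine Submodule.add_mem _ (Plt_le_Plt u (by omega) h1) (Submodule.smul_mem _ _ ?_)
    exact U_mem_Plt u (by rw [W_add]; omega)
  exact hmap ⟨x, hx, rfl⟩

lemma PmulP {n n' : ℕ} {x y : A} (hx : x ∈ P k u n) (hy : y ∈ P k u n') :
    x * y ∈ P k u (n + n') := by
  have hmap : Submodule.map (LinearMap.mulRight k y) (P k u n) ≤ P k u (n + n') := by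
    rw [P, Submodule.map_span, Submodule.span_le]
    rintro _ ⟨_, ⟨f, hf, rfl⟩, rfl⟩
    simp only [LinearMap.mulRight_apply, SetLike.mem_coe]
    have := U_mul_P u q hq hcor (a := f) hy
    exact P_mono u (by omega) this
  exact hmap ⟨x, hx, rfl⟩

/-- the filtration is exhaustive -/
theorem exhaust (hgen : Algebra.adjoin k (Set.range u) = ⊤) (x : A) :
    ∃ n, x ∈ P k u n := by
  let S : Subalgebra k A :=
    { carrier := {x | ∃ n, x ∈ P k u n}
      mul_mem' := by
        rintro a b ⟨n, ha⟩ ⟨n', hb⟩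
        exact ⟨n + n', PmulP u q hq hcor ha hb⟩
      add_mem' := by
        rintro a b ⟨n, ha⟩ ⟨n', hb⟩
        exact ⟨max n n', Submodule.add_mem _ (P_mono u (le_max_left _ _) ha)
          (P_mono u (le_max_right _ _) hb)⟩
      algebraMap_mem' := by
        intro c
        refine ⟨0, ?_⟩
        rw [Algebra.algebraMap_eq_smul_one]
        refine Submodule.smul_mem _ _ ?_
        have : (1 : A) = U u 0 := (U_zero u).symm
        rw [this]
        exact U_mem_P u (by rw [W_zero]) }
  have hsub : Set.range u ⊆ S := by
    rintro _ ⟨i, rfl⟩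
    exact ⟨ww m i, by rw [← U_single u i]; exact U_mem_P u (by rw [W_single])⟩
  have : x ∈ Algebra.adjoin k (Set.range u) := by rw [hgen]; trivial
  exact Algebra.adjoin_le hsub this

end part5
section part6

variable {k : Type*} [Field k] {m : ℕ}

abbrev Ghat (k : Type*) [Field k] (m : ℕ) := E m →₀ k

variable (q : Fin m → Fin m → k)

/-- twisted shift operator on the symbol module -/
noncomputable def shift (a : E m) : Ghat k m →ₗ[k] Ghat k m :=
  Finsupp.lsum k fun e => (cc q a e) • Finsupp.lsingle (a + e)

lemma shift_single {a e : E m} {c : k} :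
    shift q a (Finsupp.single e c) = Finsupp.single (a + e) (cc q a e * c) := by
  rw [shift, Finsupp.lsum_single]
  simp [Finsupp.smul_single, smul_eq_mul]

lemma shift_support {a : E m} {v : Ghat k m} :
    (shift q a v).support ⊆ v.support.image (a + ·) := by
  classical
  have : shift q a v = v.sum fun e c => Finsupp.single (a + e) (cc q a e * c) := by
    rw [shift, Finsupp.lsum_apply]
    apply Finsupp.sum_congr
    intro e _
    simp [Finsupp.smul_single, smul_eq_mul]
  rw [this]
  refine (Finsupp.support_sum).trans ?_
  intro d hd
  rw [Finset.mem_biUnion] at hd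
  obtain ⟨e, he, hd⟩ := hd
  have := Finsupp.support_single_subset hd
  rw [Finset.mem_singleton] at this
  subst this
  exact Finset.mem_image_of_mem _ he

lemma shift_apply_add (hq : ∀ i j : Fin m, j < i → q i j ≠ 0) {a e : E m} {v : Ghat k m} :
    (shift q a v) (a + e) = cc q a e * v e := by
  classical
  induction v using Finsupp.induction_linear with
  | zero => simp
  | add f g hf hg =>
    rw [LinearMap.map_add, Finsupp.add_apply, hf, hg, Finsupp.add_apply, mul_add]
  | single e' c =>
    rw [shift_single]
    rw [Finsupp.single_apply, Finsupp.single_apply]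
    by_cases h : e' = e
    · subst h; simp
    · rw [if_neg (fun hc => h (add_left_cancel hc)), if_neg h, mul_zero]

/-- leading exponent, as a lex value -/
noncomputable def leadL (v : Ghat k m) : Lex (E m) := v.support.sup toLex

lemma le_leadL {v : Ghat k m} {e : E m} (h : e ∈ v.support) : toLex e ≤ leadL v :=
  Finset.le_sup h

lemma leadL_mem {v : Ghat k m} (h : v ≠ 0) : ofLex (leadL v) ∈ v.support := by
  have hs : v.support.Nonempty := Finsupp.support_nonempty_iff.2 h
  obtain ⟨e, he, hsup⟩ := Finset.exists_mem_eq_sup v.support hs toLex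
  rw [leadL, hsup]
  exact he

lemma toLex_add_lt {a : E m} {e f : Lex (E m)} (h : e < f) :
    toLex (a + ofLex e) < toLex (a + ofLex f) := by
  have h1 : toLex (a + ofLex e) = toLex a + e := rfl
  have h2 : toLex (a + ofLex f) = toLex a + f := rfl
  rw [h1, h2]
  exact (add_lt_add_iff_left _).2 h

lemma toLex_add_le {a : E m} {e f : Lex (E m)} (h : e ≤ f) :
    toLex (a + ofLex e) ≤ toLex (a + ofLex f) := by
  rcases eq_or_lt_of_le h with h | h
  · subst h; exact le_rfl
  · exact le_of_lt (toLex_add_lt h)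

lemma shift_ne_zero (hq : ∀ i j : Fin m, j < i → q i j ≠ 0) {a : E m} {v : Ghat k m}
    (h : v ≠ 0) : shift q a v ≠ 0 := by
  intro hz
  have h1 := shift_apply_add q hq (a := a) (e := ofLex (leadL v)) (v := v)
  rw [hz] at h1
  have h2 : v (ofLex (leadL v)) ≠ 0 := Finsupp.mem_support_iff.1 (leadL_mem h)
  have := cc_ne_zero q hq (a := a) (b := ofLex (leadL v))
  simp only [Finsupp.coe_zero, Pi.zero_apply] at h1
  exact (mul_ne_zero this h2) h1.symm

lemma leadL_shift (hq : ∀ i j : Fin m, j < i → q i j ≠ 0) {a : E m} {v : Ghat k m}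
    (h : v ≠ 0) : leadL (shift q a v) = toLex (a + ofLex (leadL v)) := by
  apply le_antisymm
  · apply Finset.sup_le
    intro d hd
    obtain ⟨e, he, rfl⟩ := Finset.mem_image.1 (shift_support q hd)
    exact toLex_add_le (le_leadL he)
  · apply Finset.le_sup (f := toLex)
    rw [Finsupp.mem_support_iff, shift_apply_add q hq]
    exact mul_ne_zero (cc_ne_zero q hq) (Finsupp.mem_support_iff.1 (leadL_mem h))

/-- the set of leading exponents of a submodule -/
def LS (V : Submodule k (Ghat k m)) : Set (E m) :=
  {d | ∃ v ∈ V, v ≠ 0 ∧ leadL v = toLex d}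

lemma LS_mono {V V' : Submodule k (Ghat k m)} (h : V ≤ V') : LS V ⊆ LS V' := by
  rintro d ⟨v, hv, hne, hl⟩
  exact ⟨v, h hv, hne, hl⟩

lemma LS_shift_closed (hq : ∀ i j : Fin m, j < i → q i j ≠ 0)
    {V : Submodule k (Ghat k m)} (hcl : ∀ (a : E m), ∀ v ∈ V, shift q a v ∈ V) :
    ∀ d ∈ LS V, ∀ d', d ≤ d' → d' ∈ LS V := by
  rintro d ⟨v, hv, hne, hl⟩ d' hdd'
  refine ⟨shift q (d' - d) v, hcl _ v hv, shift_ne_zero q hq hne, ?_⟩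
  rw [leadL_shift q hq hne, hl]
  have : (d' - d) + d = d' := tsub_add_cancel_of_le hdd'
  simp only [ofLex_toLex]
  rw [this]

/-- key cancellation: leading-set equality forces equality -/
lemma eq_of_LS_eq {V V' : Submodule k (Ghat k m)} (hVV' : V ≤ V')
    (hLS : LS V' ⊆ LS V) : V' ≤ V := by
  intro v hv
  generalize hd : leadL v = d
  induction d using WellFoundedLT.induction generalizing v with
  | _ d IH =>
  by_cases hvz : v = 0
  · subst hvz; exact Submodule.zero_mem _
  · have hdLS : ofLex d ∈ LS V' := ⟨v, hv, hvz, by rw [hd]; simp⟩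
    obtain ⟨w, hw, hwne, hwl⟩ := hLS hdLS
    have hwl' : leadL w = d := by rw [hwl]; simp
    set lv := v (ofLex d) with hlv
    set lw := w (ofLex d) with hlw
    have hlvne : lv ≠ 0 := by
      rw [hlv, ← hd]
      exact Finsupp.mem_support_iff.1 (leadL_mem hvz)
    have hlwne : lw ≠ 0 := by
      rw [hlw, ← hwl']
      exact Finsupp.mem_support_iff.1 (leadL_mem hwne)
    set v' := v - (lv / lw) • w with hv'
    have hv'mem : v' ∈ V' := Submodule.sub_mem _ hv (Submodule.smul_mem _ _ (hVV' hw))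
    have hv'lead : v' (ofLex d) = 0 := by
      rw [hv', Finsupp.sub_apply, Finsupp.smul_apply, ← hlv, ← hlw, smul_eq_mul,
        div_mul_cancel₀ _ hlwne, sub_self]
    have hsupp : ∀ e ∈ v'.support, toLex e < d := by
      intro e he
      have hne' : toLex e ≠ d := by
        intro hc
        have : e = ofLex d := by rw [← hc]; rfl
        rw [this] at he
        exact (Finsupp.mem_support_iff.1 he) hv'lead
      have hle : toLex e ≤ d := by
        have hsub : v'.support ⊆ v.support ∪ w.support := by
          rw [hv']
          refine Finset.Subset.trans (Finsupp.support_sub) ?_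
          apply Finset.union_subset_union (le_refl _)
          exact Finsupp.support_smul
        rcases Finset.mem_union.1 (hsub he) with h | h
        · rw [← hd]; exact le_leadL h
        · rw [← hwl']; exact le_leadL h
      exact lt_of_le_of_ne hle hne'
    by_cases hv'z : v' = 0
    · have : v = (lv / lw) • w := by
        have := sub_eq_zero.1 (hv' ▸ hv'z)
        exact this
      rw [this]
      exact Submodule.smul_mem _ _ hw
    · have hlt : leadL v' < d := by
        obtain ⟨e, he, hsup⟩ := Finset.exists_mem_eq_sup v'.support
          (Finsupp.support_nonempty_iff.2 hv'z) toLex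
        rw [leadL, hsup]
        exact hsupp e he
      have hv'V : v' ∈ V := IH _ hlt hv'mem rfl
      have : v = v' + (lv / lw) • w := by rw [hv']; abel
      rw [this]
      exact Submodule.add_mem _ hv'V (Submodule.smul_mem _ _ hw)

/-- Dickson stabilization for monotone chains of upward-closed sets of exponents -/
lemma stab_of_upward (S : ℕ → Set (E m)) (hmono : Monotone S)
    (hup : ∀ n, ∀ d ∈ S n, ∀ d', d ≤ d' → d' ∈ S n) :
    ∃ n, ∀ n', n ≤ n' → S n' = S n := by
  by_contra hcon
  push_neg at hcon
  choose g hg1 hg2 using hcon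
  have hstrict : ∀ n, ∃ x, x ∈ S (g n) \ S n := by
    intro n
    have hsub : S n ⊆ S (g n) := hmono (hg1 n)
    rcases Set.eq_or_ssubset_of_subset hsub with h | h
    · exact absurd h.symm (hg2 n)
    · exact Set.exists_of_ssubset h
  choose x hx using hstrict
  let seq : ℕ → ℕ := fun K => Nat.rec 0 (fun _ nk => g nk) K
  have hseqmono : ∀ i j', i ≤ j' → seq i ≤ seq j' := by
    intro i j' hij
    induction j' with
    | zero =>
      have : i = 0 := by omega
      subst this; exact le_rfl
    | succ n ih =>
      rcases Nat.lt_or_ge i (n+1) with h | h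
      · exact le_trans (ih (by omega)) (hg1 (seq n))
      · have : i = n + 1 := by omega
        subst this; exact le_rfl
  let y : ℕ → E m := fun K => x (seq K)
  obtain ⟨a, b, hab, hle⟩ := wellQuasiOrdered_le (α := E m) y
  have hy1 : y a ∈ S (seq (a + 1)) := (hx (seq a)).1
  have hy2 : y b ∉ S (seq b) := (hx (seq b)).2
  have : y a ∈ S (seq b) := hmono (hseqmono (a+1) b (by omega)) hy1
  exact hy2 (hup _ _ this _ hle)

end part6
section part7

variable {k : Type*} [Field k] {A : Type*} [Ring A] [Algebra k A] {m : ℕ}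
variable (u : Fin m → A) (q : Fin m → Fin m → k)

/-- weight-`n` symbol evaluation -/
noncomputable def Theta (u : Fin m → A) (n : ℕ) : Ghat k m →ₗ[k] A :=
  Finsupp.lsum k fun e => if W e = n then LinearMap.toSpanSingleton k A (U u e) else 0

lemma Theta_single {n : ℕ} {e : E m} {c : k} :
    Theta u n (Finsupp.single e c) = if W e = n then c • U u e else 0 := by
  rw [Theta, Finsupp.lsum_single]
  by_cases h : W e = n
  · rw [if_pos h, if_pos h, LinearMap.toSpanSingleton_apply]
  · rw [if_neg h, if_neg h, LinearMap.zero_apply]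

/-- all-weights-up-to-`n` evaluation -/
noncomputable def Phi (u : Fin m → A) (n : ℕ) : Ghat k m →ₗ[k] A :=
  Finsupp.lsum k fun e => if W e ≤ n then LinearMap.toSpanSingleton k A (U u e) else 0

lemma Phi_single {n : ℕ} {e : E m} {c : k} :
    Phi u n (Finsupp.single e c) = if W e ≤ n then c • U u e else 0 := by
  rw [Phi, Finsupp.lsum_single]
  by_cases h : W e ≤ n
  · rw [if_pos h, if_pos h, LinearMap.toSpanSingleton_apply]
  · rw [if_neg h, if_neg h, LinearMap.zero_apply]

/-- the leading-part submodule attached to a left ideal -/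
def DD (k : Type*) [Field k] [Algebra k A] (u : Fin m → A) (I : Submodule A A) (n : ℕ) : Submodule k A :=
  (I.restrictScalars k ⊓ P k u n) ⊔ Plt k u n

noncomputable def NN (k : Type*) [Field k] [Algebra k A] (u : Fin m → A) (I : Submodule A A) : Submodule k (Ghat k m) :=
  ⨅ n, Submodule.comap (Theta u n) (DD k u I n)

lemma mem_NN {I : Submodule A A} {v : Ghat k m} :
    v ∈ NN k u I ↔ ∀ n, Theta u n v ∈ DD k u I n := by
  simp [NN, Submodule.mem_iInf, Submodule.mem_comap]

lemma NN_mono {I J : Submodule A A} (h : I ≤ J) : NN k u I ≤ NN k u J := by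
  intro v hv
  rw [mem_NN] at hv ⊢
  intro n
  have h1 : (I.restrictScalars k ⊓ P k u n) ≤ (J.restrictScalars k ⊓ P k u n) :=
    inf_le_inf_right _ (fun x hx => h hx)
  exact sup_le_sup_right h1 _ (hv n)

variable (hq : ∀ i j : Fin m, j < i → q i j ≠ 0)
  (hcor : ∀ i j : Fin m, j < i → u i * u j - q i j • (u j * u i) ∈ corr k u j)
include hq hcor

lemma Theta_shift_delta {a : E m} {n : ℕ} (v : Ghat k m) :
    Theta u (W a + n) (shift q a v) - U u a * Theta u n v ∈ Plt k u (W a + n) := by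
  induction v using Finsupp.induction_linear with
  | zero => simp only [map_zero, mul_zero, sub_zero]; exact Submodule.zero_mem _
  | add f g hf hg =>
    have : Theta u (W a + n) (shift q a (f + g)) - U u a * Theta u n (f + g)
        = (Theta u (W a + n) (shift q a f) - U u a * Theta u n f)
        + (Theta u (W a + n) (shift q a g) - U u a * Theta u n g) := by
      rw [LinearMap.map_add, LinearMap.map_add, LinearMap.map_add, mul_add]
      abel
    rw [this]
    exact Submodule.add_mem _ hf hg
  | single e c =>
    rw [shift_single, Theta_single, Theta_single]
    have hWae : W (a + e) = W a + W e := W_add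
    by_cases h : W e = n
    · rw [if_pos (by omega), if_pos h]
      have hdiff : (cc q a e * c) • U u (a + e) - U u a * (c • U u e)
          = (-c) • (U u a * U u e - cc q a e • U u (a + e)) := by
        rw [mul_smul_comm, smul_sub, neg_smul, neg_smul, smul_smul, mul_comm c (cc q a e)]
        abel
      rw [hdiff]
      refine Submodule.smul_mem _ _ (Plt_le_Plt u ?_ (Umul u q hq hcor (W a) a e le_rfl))
      omega
    · rw [if_neg (by omega), if_neg h, mul_zero, sub_zero]
      exact Submodule.zero_mem _

lemma Theta_shift_low {a : E m} {n' : ℕ} (h : n' < W a) (v : Ghat k m) :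
    Theta u n' (shift q a v) = 0 := by
  induction v using Finsupp.induction_linear with
  | zero => simp
  | add f g hf hg => rw [LinearMap.map_add, LinearMap.map_add, hf, hg, add_zero]
  | single e c =>
    rw [shift_single, Theta_single, if_neg]
    have : W (a + e) = W a + W e := W_add
    omega

lemma NN_shift_closed {I : Submodule A A} {v : Ghat k m} (hv : v ∈ NN k u I) (a : E m) :
    shift q a v ∈ NN k u I := by
  rw [mem_NN] at hv ⊢
  intro n'
  by_cases hlow : n' < W a
  · rw [Theta_shift_low u q hq hcor hlow]
    exact Submodule.zero_mem _
  · set n := n' - W a with hn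
    have hn' : n' = W a + n := by omega
    have hdelta := Theta_shift_delta u q hq hcor (a := a) (n := n) v
    have hTn := hv n
    rw [DD, Submodule.mem_sup] at hTn
    obtain ⟨y, hy, z, hz, hyz⟩ := hTn
    rw [Submodule.mem_inf] at hy
    have hkey : Theta u n' (shift q a v)
        = U u a * y + (U u a * z
          + (Theta u (W a + n) (shift q a v) - U u a * Theta u n v)) := by
      rw [← hyz, mul_add]
      rw [hn']
      abel
    rw [hkey, DD, Submodule.mem_sup]
    refine ⟨U u a * y, ?_, _, ?_, rfl⟩
    · rw [Submodule.mem_inf]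
      constructor
      · have := I.smul_mem (U u a) hy.1
        rwa [smul_eq_mul] at this
      · have := U_mul_P u q hq hcor (a := a) hy.2
        have hge : W a + n ≤ n' := by omega
        exact P_mono u hge this
    · refine Submodule.add_mem _ ?_ ?_
      · have := U_mul_Plt u q hq hcor (a := a) hz
        exact Plt_le_Plt u (by omega) this
      · exact Plt_le_Plt u (by omega) hdelta

end part7
section part7b

variable {k : Type*} [Field k] {A : Type*} [Ring A] [Algebra k A] {m : ℕ}
variable (u : Fin m → A) (q : Fin m → Fin m → k)

lemma Plt_zero : Plt k u 0 = ⊥ := by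
  have h : {x : A | ∃ a : E m, W a < 0 ∧ U u a = x} = ∅ := by
    ext x; simp
  rw [Plt, h, Submodule.span_empty]

lemma Plt_le_P_pred {n : ℕ} (h : 1 ≤ n) : Plt k u n ≤ P k u (n - 1) :=
  Submodule.span_mono (fun x ⟨a, ha, he⟩ => ⟨a, by omega, he⟩)

lemma P_le_range_Phi {n : ℕ} : P k u n ≤ LinearMap.range (Phi u n) := by
  rw [P, Submodule.span_le]
  rintro _ ⟨e, he, rfl⟩
  exact ⟨Finsupp.single e 1, by rw [Phi_single, if_pos he, one_smul]⟩

lemma Phi_sub_Theta {n : ℕ} (v : Ghat k m) :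
    Phi u n v - Theta u n v ∈ Plt k u n := by
  induction v using Finsupp.induction_linear with
  | zero => simp only [map_zero, sub_zero]; exact Submodule.zero_mem _
  | add f g hf hg =>
    have : Phi u n (f + g) - Theta u n (f + g)
        = (Phi u n f - Theta u n f) + (Phi u n g - Theta u n g) := by
      rw [LinearMap.map_add, LinearMap.map_add]; abel
    rw [this]; exact Submodule.add_mem _ hf hg
  | single e c =>
    rw [Phi_single, Theta_single]
    by_cases h1 : W e = n
    · rw [if_pos (le_of_eq h1), if_pos h1, sub_self]; exact Submodule.zero_mem _
    · by_cases h2 : W e ≤ n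
      · rw [if_pos h2, if_neg h1, sub_zero]
        exact Submodule.smul_mem _ _ (U_mem_Plt u (by omega))
      · rw [if_neg h2, if_neg h1, sub_zero]; exact Submodule.zero_mem _

lemma Theta_filter {n : ℕ} (v : Ghat k m) :
    Theta u n (v.filter (fun e => W e = n)) = Theta u n v := by
  classical
  induction v using Finsupp.induction_linear with
  | zero => rw [Finsupp.filter_zero]
  | add f g hf hg => rw [Finsupp.filter_add, LinearMap.map_add, hf, hg, LinearMap.map_add]
  | single e c =>
    by_cases h : W e = n
    · rw [Finsupp.filter_single_of_pos (p := fun e => W e = n) (a := e) (b := c) h]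
    · rw [Finsupp.filter_single_of_neg (p := fun e => W e = n) (a := e) (b := c) h, Theta_single, if_neg h, map_zero]

lemma Theta_eq_zero_of {n : ℕ} {v : Ghat k m} (h : ∀ e ∈ v.support, W e ≠ n) :
    Theta u n v = 0 := by
  rw [Theta, Finsupp.lsum_apply]
  apply Finset.sum_eq_zero
  intro e he
  simp only [if_neg (h e he), LinearMap.zero_apply]

variable (hq : ∀ i j : Fin m, j < i → q i j ≠ 0)
  (hcor : ∀ i j : Fin m, j < i → u i * u j - q i j • (u j * u i) ∈ corr k u j)
include hq hcor

lemma NN_le_cancel (hgen : Algebra.adjoin k (Set.range u) = ⊤)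
    {I J : Submodule A A} (hIJ : I ≤ J) (hNN : NN k u I = NN k u J) : J ≤ I := by
  classical
  suffices H : ∀ n, ∀ x ∈ J, x ∈ P k u n → x ∈ I by
    intro x hx
    obtain ⟨n, hn⟩ := exhaust u q hq hcor hgen x
    exact H n x hx hn
  intro n
  induction n using Nat.strong_induction_on with
  | _ n IH =>
  intro x hxJ hxP
  obtain ⟨v, hv⟩ := P_le_range_Phi u hxP
  set w := v.filter (fun e => W e = n) with hw
  set r := Phi u n v - Theta u n v with hr
  have hrmem : r ∈ Plt k u n := Phi_sub_Theta u v
  have hThw : Theta u n w = x - r := by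
    rw [hw, Theta_filter, hr, hv]; abel
  have hwNN : w ∈ NN k u J := by
    rw [mem_NN]
    intro n'
    by_cases hn' : n' = n
    · subst hn'
      rw [hThw, DD, Submodule.mem_sup]
      refine ⟨x, Submodule.mem_inf.2 ⟨hxJ, hxP⟩, -r, Submodule.neg_mem _ hrmem, ?_⟩
      abel
    · have : Theta u n' w = 0 := by
        apply Theta_eq_zero_of
        intro e he
        rw [hw, Finsupp.support_filter, Finset.mem_filter] at he
        rw [he.2]
        exact Ne.symm hn'
      rw [this]
      exact Submodule.zero_mem _
  rw [← hNN, mem_NN] at hwNN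
  have hTI := hwNN n
  rw [hThw, DD, Submodule.mem_sup] at hTI
  obtain ⟨y, hy, z, hz, hyz⟩ := hTI
  rw [Submodule.mem_inf] at hy
  have hyI : y ∈ I := hy.1
  set p := z + r with hp
  have hpPlt : p ∈ Plt k u n := Submodule.add_mem _ hz hrmem
  have hxdec : x = y + p := by
    rw [hp]
    have : y + z = x - r := hyz
    have h2 : x = y + z + r := by rw [this]; abel
    rw [h2]; abel
  have hpJ : p ∈ J := by
    have : p = x - y := by rw [hxdec]; abel
    rw [this]
    exact Submodule.sub_mem _ hxJ (hIJ hyI)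
  by_cases hn0 : n = 0
  · subst hn0
    rw [Plt_zero u, Submodule.mem_bot] at hpPlt
    rw [hxdec, hpPlt, add_zero]
    exact hyI
  · have hpP : p ∈ P k u (n - 1) := Plt_le_P_pred u (by omega) hpPlt
    have hpI : p ∈ I := IH (n - 1) (by omega) p hpJ hpP
    rw [hxdec]
    exact Submodule.add_mem _ hyI hpI

theorem noetherian_aux (hgen : Algebra.adjoin k (Set.range u) = ⊤) :
    IsNoetherianRing A := by
  rw [isNoetherianRing_iff, ← monotone_stabilizes_iff_noetherian]
  intro f
  have hgmono : ∀ {a b : ℕ}, a ≤ b → NN k u (f a) ≤ NN k u (f b) :=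
    fun hab => NN_mono u (f.monotone hab)
  have hSmono : Monotone (fun n => LS (NN k u (f n))) :=
    fun a b hab => LS_mono (hgmono hab)
  have hSup : ∀ n, ∀ d ∈ LS (NN k u (f n)), ∀ d', d ≤ d' → d' ∈ LS (NN k u (f n)) :=
    fun n => LS_shift_closed q hq
      (fun a v hv => NN_shift_closed u q hq hcor hv a)
  obtain ⟨n₀, hn₀⟩ := stab_of_upward _ hSmono hSup
  refine ⟨n₀, fun n hn => ?_⟩
  have hgeq : NN k u (f n) = NN k u (f n₀) :=
    le_antisymm (eq_of_LS_eq (hgmono hn) (le_of_eq (hn₀ n hn))) (hgmono hn)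
  exact le_antisymm (f.monotone hn)
    (NN_le_cancel u q hq hcor hgen (f.monotone hn) hgeq.symm)

end part7b

end QCnoeth


/-- Let `k` be a field and `A` an associative unital `k`-algebra generated by
elements `u 0, …, u (m-1)` such that for all `j < i` there are a nonzero scalar `q` and scalars
`α s t`, `β s t` (for `s < j` and arbitrary `t`) with
`u i * u j = q • (u j * u i) + ∑_{s < j} ∑_t (α s t • (u s * u t) + β s t • (u t * u s))`.
Then `A` is a Noetherian ring. -/
theorem noetherian_of_quasi_commuting_generators
    {k : Type*} [Field k] {A : Type*} [Ring A] [Algebra k A]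
    {m : ℕ} (u : Fin m → A)
    (hgen : Algebra.adjoin k (Set.range u) = ⊤)
    (hrel : ∀ i j : Fin m, j < i →
      ∃ (q : k) (α β : Fin m → Fin m → k), q ≠ 0 ∧
        u i * u j = q • (u j * u i) +
          ∑ s ∈ Finset.univ.filter (fun s => s < j), ∑ t : Fin m,
            (α s t • (u s * u t) + β s t • (u t * u s))) :
    IsNoetherianRing A := by
  classical
  set q : Fin m → Fin m → k := fun i j => if h : j < i then (hrel i j h).choose else 1
    with hqdef
  have hq : ∀ i j : Fin m, j < i → q i j ≠ 0 := by
    intro i j h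
    have : q i j = (hrel i j h).choose := by rw [hqdef]; simp only [dif_pos h]
    rw [this]
    obtain ⟨α, β, h0, -⟩ := (hrel i j h).choose_spec
    exact h0
  have hcor : ∀ i j : Fin m, j < i →
      u i * u j - q i j • (u j * u i) ∈ QCnoeth.corr k u j := by
    intro i j h
    obtain ⟨α, β, h0, heq⟩ := (hrel i j h).choose_spec
    have hqij : q i j = (hrel i j h).choose := by rw [hqdef]; simp only [dif_pos h]
    rw [hqij, sub_eq_of_eq_add' heq]
    refine Submodule.sum_mem _ ?_
    intro s hs
    refine Submodule.sum_mem _ ?_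
    intro t _
    have hsj : s < j := (Finset.mem_filter.1 hs).2
    exact Submodule.add_mem _
      (Submodule.smul_mem _ _ (Submodule.subset_span ⟨s, t, hsj, Or.inl rfl⟩))
      (Submodule.smul_mem _ _ (Submodule.subset_span ⟨s, t, hsj, Or.inr rfl⟩))
  exact QCnoeth.noetherian_aux u q hq hcor hgen
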